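/- For every τ ∈ (0, 1/4), with c = −(243(1−4τ)²/64)^{1/3} (real cube root), the polynomial identity 4(3z⁴ − 3z − c)³ − 27(−2z⁶ + 3z³ + cz² − 3τ)² = (243/256)·q₁(z)·q₂(z)² holds for all z ∈ ℂ. -/

import Mathlib

noncomputable section

/-- The constant `c = −(243(1−4τ)²/64)^{1/3}` (real cube root). -/
def ccf (τ : ℝ) : ℝ := -(243 * (1 - 4 * τ) ^ 2 / 64) ^ ((1 : ℝ) / 3)

/-- `R(z) = 3z⁴ − 3z − c`. -/
def RR (τ : ℝ) (z : ℂ) : ℂ := 3 * z ^ 4 - 3 * z - (ccf τ : ℂ)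

/-- `D(z) = −2z⁶ + 3z³ + cz² − 3τ`. -/
def DD (τ : ℝ) (z : ℂ) : ℂ :=
  -2 * z ^ 6 + 3 * z ^ 3 + (ccf τ : ℂ) * z ^ 2 - 3 * (τ : ℂ)

/-- The quartic `q₁`. -/
def q1 (τ : ℝ) (z : ℂ) : ℂ :=
  ((256 / (3 : ℝ) ^ ((5 : ℝ) / 3) * (1 - 4 * τ) ^ ((1 : ℝ) / 3) : ℝ) : ℂ) * z ^ 4
    + (128 / 9 : ℂ) * z ^ 3
    + ((16 / (3 : ℝ) ^ ((1 : ℝ) / 3) * (1 - 4 * τ) ^ ((2 : ℝ) / 3) : ℝ) : ℂ) * z ^ 2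
    - ((32 * (3 : ℝ) ^ ((1 : ℝ) / 3) * (1 - 4 * τ) ^ ((1 : ℝ) / 3) : ℝ) : ℂ) * z
    + ((16 * (1 - 8 * τ) : ℝ) : ℂ)

/-- The linear factor `q₂`. -/
def q2 (τ : ℝ) (z : ℂ) : ℂ :=
  (((3 : ℝ) ^ ((1 : ℝ) / 3) * (1 - 4 * τ) ^ ((1 : ℝ) / 3) : ℝ) : ℂ) * z - 1

/-- The double point `b_* = (3(1−4τ))^{−1/3}`. -/
def bstar (τ : ℝ) : ℝ := (3 * (1 - 4 * τ)) ^ (-(1 : ℝ) / 3)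

/-- For every `τ ∈ (0, 1/4)`, with `c = −(243(1−4τ)²/64)^{1/3}`, the
polynomial identity `4R(z)³ − 27D(z)² = (243/256)·q₁(z)·q₂(z)²` holds for all `z ∈ ℂ`. -/
theorem discriminant_factorization (τ : ℝ) (hτ : τ ∈ Set.Ioo (0 : ℝ) (1 / 4)) (z : ℂ) :
    4 * RR τ z ^ 3 - 27 * DD τ z ^ 2 = (243 / 256) * q1 τ z * q2 τ z ^ 2 := by
  obtain ⟨hτ0, hτ4⟩ := hτ
  have h1 : (0 : ℝ) < 1 - 4 * τ := by linarith
  set a : ℝ := (3 : ℝ) ^ ((1 : ℝ) / 3) with ha_def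
  set b : ℝ := (1 - 4 * τ) ^ ((1 : ℝ) / 3) with hb_def
  have ha_pos : 0 < a := Real.rpow_pos_of_pos (by norm_num) _
  have hb_pos : 0 < b := Real.rpow_pos_of_pos h1 _
  have ha3 : a ^ 3 = 3 := by
    rw [ha_def, ← Real.rpow_natCast ((3:ℝ) ^ ((1:ℝ)/3)) 3, ← Real.rpow_mul (by norm_num)]
    norm_num
  have hb3 : b ^ 3 = 1 - 4 * τ := by
    rw [hb_def, ← Real.rpow_natCast ((1 - 4*τ) ^ ((1:ℝ)/3)) 3, ← Real.rpow_mul h1.le]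
    norm_num
  have ha6 : a ^ 6 = 9 := by
    have : a ^ 6 = (a ^ 3) ^ 2 := by ring
    rw [this, ha3]; norm_num
  have h53 : (3 : ℝ) ^ ((5 : ℝ) / 3) = a ^ 5 := by
    rw [ha_def, ← Real.rpow_natCast ((3:ℝ) ^ ((1:ℝ)/3)) 5, ← Real.rpow_mul (by norm_num)]
    norm_num
  have h23 : (1 - 4 * τ) ^ ((2 : ℝ) / 3) = b ^ 2 := by
    rw [hb_def, ← Real.rpow_natCast ((1 - 4*τ) ^ ((1:ℝ)/3)) 2, ← Real.rpow_mul h1.le]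
    norm_num
  have hc : ccf τ = -(3 / 4 * (a * b) ^ 2) := by
    have hx : (0 : ℝ) ≤ 3 / 4 * (a * b) ^ 2 := by positivity
    have hcube : (3 / 4 * (a * b) ^ 2) ^ 3 = 243 * (1 - 4 * τ) ^ 2 / 64 := by
      have : (3 / 4 * (a * b) ^ 2) ^ 3 = 27 / 64 * (a ^ 3) ^ 2 * (b ^ 3) ^ 2 := by ring
      rw [this, ha3, hb3]; ring
    rw [ccf, ← hcube, ← Real.rpow_natCast (3 / 4 * (a * b) ^ 2) 3,
      ← Real.rpow_mul hx]
    norm_num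
  have r1 : 256 / (3 : ℝ) ^ ((5 : ℝ) / 3) * (1 - 4 * τ) ^ ((1 : ℝ) / 3)
      = 256 * a * b / 9 := by
    rw [h53, ← hb_def]
    rw [div_mul_eq_mul_div, div_eq_div_iff (by positivity) (by norm_num)]
    nlinarith [ha6]
  have r2 : 16 / (3 : ℝ) ^ ((1 : ℝ) / 3) * (1 - 4 * τ) ^ ((2 : ℝ) / 3)
      = 16 * a ^ 2 * b ^ 2 / 3 := by
    rw [h23, ← ha_def]
    rw [div_mul_eq_mul_div, div_eq_div_iff (by positivity) (by norm_num)]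
    nlinarith [ha3]
  simp only [RR, DD, q1, q2, hc, r1, r2]
  simp only [← ha_def, ← hb_def]
  have hA : ((a : ℂ)) ^ 3 = 3 := by exact_mod_cast ha3
  have hB : ((b : ℂ)) ^ 3 = 1 - 4 * (τ : ℂ) := by exact_mod_cast hb3
  push_cast
  set A : ℂ := (a : ℂ)
  set B : ℂ := (b : ℂ)
  set T : ℂ := (τ : ℂ)
  linear_combination
    ((81/2) * B^3 * z^3 - 27 * B^3 * z^6 + (81/16) * B^6 - (81/4) * A * B^4 * z
      + (27/16) * A^3 * B^6) * hA
    + ((243:ℂ)/16 - (243/4) * T + (243/2) * z^3 - 81 * z^6 + (243/16) * B^3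
      - (243/4) * A * B * z) * hB
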